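/- If α/π is rational, then the Strong Knudsen's Law fails: there exist a probability measure ν on [0,π] absolutely continuous with respect to μ and a Borel set A ⊆ [0,π] such that ν^(n)(A) does not converge to μ(A) as n → ∞. -/

import Mathlib

open Real MeasureTheory Set Filter Topology
open scoped ENNReal NNReal

noncomputable section

namespace RandomBilliard

/-- The four maps `T_1, …, T_4` of the Feres random map
(index `i : Fin 4` stands for `T_{i+1}`). -/
def T (α : ℝ) : Fin 4 → ℝ → ℝ
  | 0 => fun θ => θ + 2 * α
  | 1 => fun θ => -θ + 2 * π - 4 * α
  | 2 => fun θ => θ - 2 * α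
  | 3 => fun θ => -θ + 4 * α

/-- `u_a(θ) = (1/2)(1 + tan a / tan θ)`. -/
def u (a θ : ℝ) : ℝ := 1 / 2 * (1 + Real.tan a / Real.tan θ)

/-- The probabilities `p_1, …, p_4` of the Feres random map
(index `i : Fin 4` stands for `p_{i+1}`). -/
def p (α : ℝ) : Fin 4 → ℝ → ℝ
  | 0 => fun θ =>
      if θ < α then 1
      else if θ < π - 3 * α then u α θ
      else if θ < π - 2 * α then 2 * Real.cos (2 * α) * u (2 * α) θ
      else 0
  | 1 => fun θ =>
      if θ < π - 3 * α then 0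
      else if θ < π - 2 * α then u α θ - 2 * Real.cos (2 * α) * u (2 * α) θ
      else if θ < π - α then u α θ
      else 0
  | 2 => fun θ =>
      if θ < 2 * α then 0
      else if θ < 3 * α then 2 * Real.cos (2 * α) * u (2 * α) (-θ)
      else if θ < π - α then u α (-θ)
      else 1
  | 3 => fun θ =>
      if θ < α then 0
      else if θ < 2 * α then u α (-θ)
      else if θ < 3 * α then u α (-θ) - 2 * Real.cos (2 * α) * u (2 * α) (-θ)
      else 0

/-- `iterT α x k θ = T_x^{(k)}(θ) = T_{x_k} ∘ ⋯ ∘ T_{x_1}(θ)`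
(the term `x j : Fin 4` stands for the symbol `x_{j+1}`). -/
def iterT (α : ℝ) (x : ℕ → Fin 4) : ℕ → ℝ → ℝ
  | 0 => fun θ => θ
  | k + 1 => fun θ => T α (x k) (iterT α x k θ)

/-- `Σ_θ`: the admissible symbol sequences for `θ`, i.e. those whose every finite
prefix has positive probability. -/
def SigmaTheta (α θ : ℝ) : Set (ℕ → Fin 4) :=
  {x | ∀ k : ℕ, 0 < ∏ j ∈ Finset.range k, p α (x j) (iterT α x j θ)}

/-- `C(θ)`: all possible future images of `θ` under the Feres random map. -/
def Cset (α θ : ℝ) : Set ℝ :=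
  {θ' | θ' ∈ Set.Ioo 0 π ∧
    ∃ (x : ℕ → Fin 4) (k : ℕ), x ∈ SigmaTheta α θ ∧ iterT α x k θ = θ'}

/-- The probability measure `μ(A) = (1/2) ∫_A sin θ dθ` on `[0, π]`. -/
def mu0 : Measure ℝ :=
  (volume.restrict (Set.Icc 0 π)).withDensity fun θ => ENNReal.ofReal (1 / 2 * Real.sin θ)

/-- One step of the evolution of a measure under the Feres random map:
`(stepMeasure α ν)(A) = ∫ K(θ, A) dν(θ)`, where `K(θ, A) = Σ_i p_i(θ) 1_A(T_i θ)`. -/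
def stepMeasure (α : ℝ) (ν : Measure ℝ) : Measure ℝ :=
  ∑ i : Fin 4, Measure.map (T α i) (ν.withDensity fun θ => ENNReal.ofReal (p α i θ))

/-- One step of the evolution of a measure under the random billiard map in the circle
`F̄(s, θ) = (s + 2 T_i(θ) mod 2π, T_i(θ))` with probability `p_i(θ)`. -/
def circleStep (α : ℝ) (ν : Measure (ℝ × ℝ)) : Measure (ℝ × ℝ) :=
  ∑ i : Fin 4,
    Measure.map
      (fun q : ℝ × ℝ => (toIcoMod Real.two_pi_pos 0 (q.1 + 2 * T α i q.2), T α i q.2))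
      (ν.withDensity fun q => ENNReal.ofReal (p α i q.2))

/-- The transition kernel `K(θ', ·) = Σ_i p_i(θ') δ_{T_i(θ')}` of the Feres random map. -/
def feresKernel (α : ℝ) (t : ℝ) : Measure ℝ :=
  ∑ i : Fin 4, ENNReal.ofReal (p α i t) • Measure.dirac (T α i t)

/-- `k`-step iterates of a transition kernel. -/
def kerIterate (κ : ℝ → Measure ℝ) : ℕ → ℝ → Measure ℝ
  | 0 => fun t => Measure.dirac t
  | k + 1 => fun t => (κ t).bind (kerIterate κ k)

/-- The probability that a Markov chain with kernel `κ` started at `t` satisfies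
`θ_0 ∈ B 0, …, θ_n ∈ B n`. -/
def cylProb (κ : ℝ → Measure ℝ) : ℕ → (ℕ → Set ℝ) → ℝ → ℝ≥0∞
  | 0 => fun B t => Set.indicator (B 0) (fun _ => (1 : ℝ≥0∞)) t
  | n + 1 => fun B t =>
      Set.indicator (B 0)
        (fun _ => ∫⁻ t', cylProb κ n (fun k => B (k + 1)) t' ∂(κ t)) t

/-- `ν` is the Markov path measure on `ℕ → ℝ` (given by the Ionescu–Tulcea construction)
with initial distribution `ρ` and transition kernel `κ`, characterized by its values
on cylinder sets. -/
def IsMarkovPathMeasure (κ : ℝ → Measure ℝ) (ρ : Measure ℝ) (ν : Measure (ℕ → ℝ)) : Prop :=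
  ∀ (n : ℕ) (B : ℕ → Set ℝ), (∀ k, MeasurableSet (B k)) →
    ν {ω | ∀ k ≤ n, ω k ∈ B k} = ∫⁻ t, cylProb κ n B t ∂ρ

/-- The shift map on sequences. -/
def shift : (ℕ → ℝ) → ℕ → ℝ := fun ω n => ω (n + 1)

/-- Aperiodicity of the Markov chain with kernel `κ` on the state space `S`:
for every state, every common divisor of the return times having positive
probability equals `1` (i.e. every state has period 1). -/
def AperiodicChain (κ : ℝ → Measure ℝ) (S : Set ℝ) : Prop :=
  ∀ t ∈ S, ∀ d : ℕ, (∀ k : ℕ, 1 ≤ k → 0 < kerIterate κ k t {t} → d ∣ k) → d = 1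

end RandomBilliard

open RandomBilliard


namespace RandomBilliard

lemma u_add (a θ : ℝ) : u a θ + u a (-θ) = 1 := by
  simp [u, Real.tan_neg, div_neg]; ring

lemma sum_p (α : ℝ) (hα : α ∈ Set.Ioo 0 (π/6)) (θ : ℝ) (hθ : θ ∈ Set.Icc 0 π) :
    p α 0 θ + p α 1 θ + p α 2 θ + p α 3 θ = 1 := by
  obtain ⟨h0, h6⟩ := hα
  have h6' : 6 * α < π := by linarith
  have key := u_add α θ
  obtain ⟨ht0, htπ⟩ := hθ
  simp only [p]
  split_ifs <;> linarith [key]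

lemma T_mem_Icc (α : ℝ) (hα : α ∈ Set.Ioo 0 (π/6)) (i : Fin 4) (θ : ℝ)
    (hθ : θ ∈ Set.Icc 0 π) (hp : 0 < p α i θ) : T α i θ ∈ Set.Icc 0 π := by
  obtain ⟨h0, h6⟩ := hα
  have h6' : 6 * α < π := by linarith
  obtain ⟨ht0, htπ⟩ := hθ
  fin_cases i <;>
    · simp only [p, T] at hp ⊢
      split_ifs at hp with h1 h2 h3 <;> constructor <;> linarith

/-- The invariant fattened orbit set. -/
def Aset (α c δ : ℝ) : Set ℝ :=
  Set.Icc 0 π ∩ ⋃ k : ℤ,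
    (Set.Icc (α + k * c - δ) (α + k * c + δ) ∪ Set.Icc (-α + k * c - δ) (-α + k * c + δ))

lemma measurableSet_Aset (α c δ : ℝ) : MeasurableSet (Aset α c δ) :=
  measurableSet_Icc.inter (MeasurableSet.iUnion fun _ =>
    (measurableSet_Icc.union measurableSet_Icc))

lemma Aset_inv (α c δ : ℝ) (hα : α ∈ Set.Ioo 0 (π/6)) (e f : ℤ)
    (he : 2 * α = (e : ℝ) * c) (hf : 2 * π = (f : ℝ) * c)
    (i : Fin 4) (θ : ℝ) (hθ : θ ∈ Aset α c δ) (hp : 0 < p α i θ) :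
    T α i θ ∈ Aset α c δ := by
  obtain ⟨hθI, hθU⟩ := hθ
  refine ⟨T_mem_Icc α hα i θ hθI hp, ?_⟩
  simp only [Set.mem_iUnion, Set.mem_union, Set.mem_Icc] at hθU ⊢
  obtain ⟨k, hk⟩ := hθU
  fin_cases i
  · simp only [T]
    refine ⟨k + e, ?_⟩
    rcases hk with ⟨h1, h2⟩ | ⟨h1, h2⟩
    · exact Or.inl ⟨by push_cast; linarith, by push_cast; linarith⟩
    · exact Or.inr ⟨by push_cast; linarith, by push_cast; linarith⟩
  · simp only [T]
    refine ⟨f - 2*e - k, ?_⟩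
    rcases hk with ⟨h1, h2⟩ | ⟨h1, h2⟩
    · exact Or.inr ⟨by push_cast; linarith, by push_cast; linarith⟩
    · exact Or.inl ⟨by push_cast; linarith, by push_cast; linarith⟩
  · simp only [T]
    refine ⟨k - e, ?_⟩
    rcases hk with ⟨h1, h2⟩ | ⟨h1, h2⟩
    · exact Or.inl ⟨by push_cast; linarith, by push_cast; linarith⟩
    · exact Or.inr ⟨by push_cast; linarith, by push_cast; linarith⟩
  · simp only [T]
    refine ⟨2*e - k, ?_⟩
    rcases hk with ⟨h1, h2⟩ | ⟨h1, h2⟩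
    · exact Or.inr ⟨by push_cast; linarith, by push_cast; linarith⟩
    · exact Or.inl ⟨by push_cast; linarith, by push_cast; linarith⟩

lemma measurable_tan' : Measurable Real.tan := by
  have : Real.tan = fun x => Real.sin x / Real.cos x := funext fun x => Real.tan_eq_sin_div_cos x
  rw [this]; exact Real.measurable_sin.div Real.measurable_cos

lemma measurable_u (a : ℝ) : Measurable (u a) := by
  unfold u
  exact (measurable_const.add (measurable_const.div measurable_tan')).const_mul _

lemma measurable_T (α : ℝ) (i : Fin 4) : Measurable (T α i) := by
  fin_cases i
  · exact measurable_id.add_const _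
  · exact (measurable_neg.add_const _).sub_const _
  · exact measurable_id.sub_const _
  · exact measurable_neg.add_const _

lemma measurable_p (α : ℝ) (i : Fin 4) : Measurable (p α i) := by
  have hu : ∀ a : ℝ, Measurable fun θ => u a (-θ) :=
    fun a => (measurable_u a).comp measurable_neg
  have hcm : ∀ a : ℝ, Measurable fun θ => 2 * Real.cos (2*α) * u a θ :=
    fun a => (measurable_u a).const_mul _
  have hcm' : ∀ a : ℝ, Measurable fun θ => 2 * Real.cos (2*α) * u a (-θ) :=
    fun a => (hu a).const_mul _
  fin_cases i <;> simp only [p]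
  · exact Measurable.ite measurableSet_Iio measurable_const
      (Measurable.ite measurableSet_Iio (measurable_u α)
        (Measurable.ite measurableSet_Iio (hcm _) measurable_const))
  · exact Measurable.ite measurableSet_Iio measurable_const
      (Measurable.ite measurableSet_Iio ((measurable_u α).sub (hcm _))
        (Measurable.ite measurableSet_Iio (measurable_u α) measurable_const))
  · exact Measurable.ite measurableSet_Iio measurable_const
      (Measurable.ite measurableSet_Iio (hcm' _)
        (Measurable.ite measurableSet_Iio (hu α) measurable_const))
  · exact Measurable.ite measurableSet_Iio measurable_const
      (Measurable.ite measurableSet_Iio (hu α)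
        (Measurable.ite measurableSet_Iio ((hu α).sub (hcm' _)) measurable_const))

lemma step_ge (α : ℝ) (A : Set ℝ) (hA : MeasurableSet A)
    (hsum : ∀ θ ∈ A, p α 0 θ + p α 1 θ + p α 2 θ + p α 3 θ = 1)
    (hinv : ∀ (i : Fin 4), ∀ θ ∈ A, 0 < p α i θ → T α i θ ∈ A)
    (m : Measure ℝ) : m A ≤ stepMeasure α m A := by
  have hpre : ∀ i : Fin 4, MeasurableSet (T α i ⁻¹' A) := fun i => hA.preimage (measurable_T α i)
  have h1 : stepMeasure α m A
      = ∑ i : Fin 4, ∫⁻ θ in T α i ⁻¹' A, ENNReal.ofReal (p α i θ) ∂m := by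
    rw [stepMeasure, Measure.finset_sum_apply]
    refine Finset.sum_congr rfl fun i _ => ?_
    rw [Measure.map_apply (measurable_T α i) hA, withDensity_apply _ (hpre i)]
  have h2 : ∀ i : Fin 4, ∫⁻ θ in T α i ⁻¹' A, ENNReal.ofReal (p α i θ) ∂m
      = ∫⁻ θ, (T α i ⁻¹' A).indicator (fun θ => ENNReal.ofReal (p α i θ)) θ ∂m := by
    intro i
    rw [lintegral_indicator (hpre i)]
  have hmeas : ∀ i : Fin 4,
      Measurable ((T α i ⁻¹' A).indicator (fun θ => ENNReal.ofReal (p α i θ))) := by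
    intro i
    exact (Measurable.ennreal_ofReal (measurable_p α i)).indicator (hpre i)
  calc m A = ∫⁻ _ in A, 1 ∂m := (setLIntegral_one A).symm
    _ ≤ ∫⁻ θ in A, ∑ i : Fin 4,
          (T α i ⁻¹' A).indicator (fun θ => ENNReal.ofReal (p α i θ)) θ ∂m := by
        refine setLIntegral_mono (Finset.measurable_sum _ fun i _ => hmeas i) fun θ hθ => ?_
        have hle : ∀ i : Fin 4, ENNReal.ofReal (p α i θ)
            ≤ (T α i ⁻¹' A).indicator (fun θ => ENNReal.ofReal (p α i θ)) θ := by
          intro i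
          rcases le_or_gt (p α i θ) 0 with h | h
          · simp [ENNReal.ofReal_eq_zero.2 h]
          · rw [Set.indicator_of_mem (show θ ∈ T α i ⁻¹' A from hinv i θ hθ h)]
        calc (1:ℝ≥0∞) = ENNReal.ofReal (p α 0 θ + p α 1 θ + p α 2 θ + p α 3 θ) := by
              rw [hsum θ hθ, ENNReal.ofReal_one]
          _ ≤ ENNReal.ofReal (p α 0 θ) + ENNReal.ofReal (p α 1 θ)
              + ENNReal.ofReal (p α 2 θ) + ENNReal.ofReal (p α 3 θ) := by
              calc ENNReal.ofReal (p α 0 θ + p α 1 θ + p α 2 θ + p α 3 θ)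
                  ≤ ENNReal.ofReal (p α 0 θ + p α 1 θ + p α 2 θ) + ENNReal.ofReal (p α 3 θ) :=
                    ENNReal.ofReal_add_le
                _ ≤ ENNReal.ofReal (p α 0 θ + p α 1 θ) + ENNReal.ofReal (p α 2 θ)
                    + ENNReal.ofReal (p α 3 θ) := by
                    gcongr; exact ENNReal.ofReal_add_le
                _ ≤ _ := by gcongr; exact ENNReal.ofReal_add_le
          _ ≤ ∑ i : Fin 4,
              (T α i ⁻¹' A).indicator (fun θ => ENNReal.ofReal (p α i θ)) θ := by
              rw [Fin.sum_univ_four]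
              gcongr <;> exact hle _
    _ ≤ ∫⁻ θ, ∑ i : Fin 4,
          (T α i ⁻¹' A).indicator (fun θ => ENNReal.ofReal (p α i θ)) θ ∂m :=
        setLIntegral_le_lintegral _ _
    _ = ∑ i : Fin 4, ∫⁻ θ, (T α i ⁻¹' A).indicator
          (fun θ => ENNReal.ofReal (p α i θ)) θ ∂m :=
        lintegral_finset_sum _ fun i _ => hmeas i
    _ = stepMeasure α m A := by rw [h1]; exact Finset.sum_congr rfl fun i _ => (h2 i).symm

lemma mu0_le : mu0 ≤ (ENNReal.ofReal (1/2)) • volume := by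
  refine Measure.le_iff.2 fun s hs => ?_
  rw [mu0, withDensity_apply _ hs]
  calc ∫⁻ θ in s, ENNReal.ofReal (1/2 * Real.sin θ) ∂(volume.restrict (Set.Icc 0 π))
      ≤ ∫⁻ _ in s, ENNReal.ofReal (1/2) ∂(volume.restrict (Set.Icc 0 π)) := by
        refine setLIntegral_mono measurable_const fun θ _ => ?_
        exact ENNReal.ofReal_le_ofReal (by nlinarith [Real.sin_le_one θ, Real.neg_one_le_sin θ])
    _ = ENNReal.ofReal (1/2) * (volume.restrict (Set.Icc 0 π)) s := setLIntegral_const _ _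
    _ ≤ ENNReal.ofReal (1/2) * volume s := by
        gcongr
        exact Measure.restrict_le_self

lemma mu0_apply_le (s : Set ℝ) : mu0 s ≤ ENNReal.ofReal (1/2) * volume s := by
  have := Measure.le_iff'.1 mu0_le s
  simpa using this

lemma mu0_Icc_le (x δ : ℝ) : mu0 (Set.Icc (x - δ) (x + δ)) ≤ ENNReal.ofReal δ := by
  calc mu0 (Set.Icc (x - δ) (x + δ)) ≤ ENNReal.ofReal (1/2) * volume (Set.Icc (x-δ) (x+δ)) :=
        mu0_apply_le _
    _ = ENNReal.ofReal (1/2) * ENNReal.ofReal (2*δ) := by rw [Real.volume_Icc]; ring_nf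
    _ = ENNReal.ofReal (1/2 * (2*δ)) := (ENNReal.ofReal_mul (by norm_num)).symm
    _ = ENNReal.ofReal δ := by ring_nf

lemma mu0_Icc_pos (x y : ℝ) (h0 : 0 < x) (hxy : x < y) (hy : y ≤ π/2) :
    0 < mu0 (Set.Icc x y) := by
  have hsub : Set.Icc x y ⊆ Set.Icc 0 π := fun t ht =>
    ⟨le_trans h0.le ht.1, le_trans ht.2 (by linarith [pi_pos])⟩
  have hbase : (volume.restrict (Set.Icc 0 π)).restrict (Set.Icc x y)
      = volume.restrict (Set.Icc x y) := by
    rw [Measure.restrict_restrict measurableSet_Icc, Set.inter_eq_left.2 hsub]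
  have h1 : mu0 (Set.Icc x y)
      = ∫⁻ θ in Set.Icc x y, ENNReal.ofReal (1/2 * Real.sin θ) ∂volume := by
    rw [mu0, withDensity_apply _ measurableSet_Icc, hbase]
  have hsx : 0 < Real.sin x := Real.sin_pos_of_pos_of_lt_pi h0 (by linarith [pi_pos])
  have h2 : ENNReal.ofReal (1/2 * Real.sin x) * volume (Set.Icc x y)
      ≤ mu0 (Set.Icc x y) := by
    rw [h1]
    calc ENNReal.ofReal (1/2 * Real.sin x) * volume (Set.Icc x y)
        = ∫⁻ _ in Set.Icc x y, ENNReal.ofReal (1/2 * Real.sin x) ∂volume :=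
          (setLIntegral_const _ _).symm
      _ ≤ ∫⁻ θ in Set.Icc x y, ENNReal.ofReal (1/2 * Real.sin θ) ∂volume := by
          refine setLIntegral_mono
            ((Real.measurable_sin.const_mul _).ennreal_ofReal) fun θ hθ => ?_
          refine ENNReal.ofReal_le_ofReal ?_
          have := Real.sin_le_sin_of_le_of_le_pi_div_two (by linarith [pi_pos] : -(π/2) ≤ x)
            (le_trans hθ.2 hy) hθ.1
          linarith
  refine lt_of_lt_of_le ?_ h2
  apply ENNReal.mul_pos
  · simp only [ne_eq, ENNReal.ofReal_eq_zero, not_le]; positivity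
  · simp only [Real.volume_Icc, ne_eq, ENNReal.ofReal_eq_zero, not_le]
    linarith

end RandomBilliard

/-- if `α/π` is rational, the Strong Knudsen's Law fails: there is a
probability measure `ν ≪ μ` and a Borel set `A ⊆ [0, π]` with `ν^(n)(A) ↛ μ(A)`. -/
theorem knudsen_fails_of_rational (α : ℝ) (hα : α ∈ Set.Ioo 0 (π / 6))
    (hrat : ∃ q : ℚ, (q : ℝ) = α / π) :
    ∃ ν : Measure ℝ, IsProbabilityMeasure ν ∧ ν ≪ mu0 ∧
      ∃ A : Set ℝ, MeasurableSet A ∧ A ⊆ Set.Icc 0 π ∧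
        ¬ Tendsto (fun n : ℕ => (stepMeasure α)^[n] ν A) atTop (nhds (mu0 A)) := by
  obtain ⟨q, hq⟩ := hrat
  have hπ : (0:ℝ) < π := pi_pos
  have hπ3 : (3:ℝ) < π := pi_gt_three
  obtain ⟨hα0, hα6⟩ := hα
  have hαπ : α = (q:ℝ) * π := by
    rw [eq_div_iff hπ.ne'] at hq; linarith
  have hqR : (0:ℝ) < (q:ℝ) := by nlinarith
  set b : ℕ := q.den with hbdef
  have hb1 : 1 ≤ b := q.den_pos
  have hbR : (0:ℝ) < (b:ℝ) := by exact_mod_cast q.den_pos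
  have hbR1 : (1:ℝ) ≤ (b:ℝ) := by exact_mod_cast hb1
  set c : ℝ := 2 * π / (b:ℝ) with hcdef
  have hc : 0 < c := by positivity
  have hbc : (b:ℝ) * c = 2 * π := by rw [hcdef]; field_simp [hbR.ne']
  have hqnd : (q:ℝ) = (q.num : ℝ) / (b:ℝ) := by
    rw [hbdef]; exact_mod_cast (Rat.num_div_den q).symm
  have h2α : 2 * α = ((q.num : ℤ) : ℝ) * c := by
    rw [hαπ, hqnd, hcdef]; field_simp
  have h2π : 2 * π = (((b:ℤ)) : ℝ) * c := by push_cast; linarith [hbc]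
  set δ : ℝ := min (α/2) (1/(16*(b:ℝ)+8)) with hδdef
  have hδpos : 0 < δ := lt_min (by linarith) (by positivity)
  have hδα : δ ≤ α/2 := min_le_left _ _
  have hδb : δ ≤ 1/(16*(b:ℝ)+8) := min_le_right _ _
  set A : Set ℝ := Aset α c δ with hAdef
  have hAmeas : MeasurableSet A := measurableSet_Aset α c δ
  have hAsub : A ⊆ Set.Icc 0 π := Set.inter_subset_left
  -- the starting interval
  set I : Set ℝ := Set.Icc (α - δ) (α + δ) with hIdef
  have hIA : I ⊆ A := by
    intro θ hθ
    obtain ⟨h1, h2⟩ := hθ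
    refine ⟨⟨by linarith, by linarith⟩, Set.mem_iUnion.2 ⟨0, Or.inl ?_⟩⟩
    constructor <;> · push_cast; simp only [zero_mul]; linarith
  have hmI0 : 0 < mu0 I := mu0_Icc_pos (α - δ) (α + δ) (by linarith) (by linarith)
    (by linarith)
  have hmItop : mu0 I ≠ ⊤ :=
    (lt_of_le_of_lt (mu0_Icc_le α δ) ENNReal.ofReal_lt_top).ne
  set ν : Measure ℝ := (mu0 I)⁻¹ • mu0.restrict I with hνdef
  have hν_apply : ∀ s : Set ℝ, MeasurableSet s → ν s = (mu0 I)⁻¹ * mu0 (s ∩ I) := by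
    intro s hs
    rw [hνdef, Measure.smul_apply, Measure.restrict_apply hs, smul_eq_mul]
  have hνuniv : ν Set.univ = 1 := by
    rw [hν_apply _ MeasurableSet.univ, Set.univ_inter]
    exact ENNReal.inv_mul_cancel hmI0.ne' hmItop
  refine ⟨ν, ⟨hνuniv⟩, ?_, A, hAmeas, hAsub, ?_⟩
  · refine Measure.AbsolutelyContinuous.mk fun s hs h0 => ?_
    rw [hν_apply s hs]
    have : mu0 (s ∩ I) = 0 :=
      le_antisymm (le_trans (measure_mono Set.inter_subset_left) h0.le) (by simp)
    rw [this, mul_zero]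
  -- the iterates all give measure ≥ 1 to A
  have hνA : ν A = 1 := by
    rw [hν_apply A hAmeas, Set.inter_eq_right.2 hIA]
    exact ENNReal.inv_mul_cancel hmI0.ne' hmItop
  have hstep : ∀ m : Measure ℝ, m A ≤ stepMeasure α m A :=
    step_ge α A hAmeas (fun θ hθ => sum_p α ⟨hα0, hα6⟩ θ (hAsub hθ))
      (fun i θ hθ hp => Aset_inv α c δ ⟨hα0, hα6⟩ q.num (b:ℤ) h2α h2π i θ hθ hp)
  have hiter : ∀ n : ℕ, 1 ≤ (stepMeasure α)^[n] ν A := by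
    intro n
    induction n with
    | zero => simp [hνA]
    | succ n ih =>
        rw [Function.iterate_succ_apply']
        exact le_trans ih (hstep _)
  -- mu0 A < 1
  have hmuA : mu0 A < 1 := by
    set J : Finset ℤ := Finset.Icc (-(2*(b:ℤ))) (2*(b:ℤ)) with hJdef
    have hcover : A ⊆ ⋃ k ∈ J,
        (Set.Icc (α + k * c - δ) (α + k * c + δ)
          ∪ Set.Icc (-α + k * c - δ) (-α + k * c + δ)) := by
      intro θ hθ
      obtain ⟨⟨ht0, htπ⟩, hU⟩ := hθ
      obtain ⟨k, hk⟩ := Set.mem_iUnion.1 hU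
      have hδ1 : δ ≤ 1 := le_trans hδb (by rw [div_le_one (by positivity)]; linarith)
      have hkJ : k ∈ J := by
        have hbound : -(2*(b:ℝ)) * c ≤ (k:ℝ) * c ∧ (k:ℝ) * c ≤ (2*(b:ℝ)) * c := by
          rcases hk with ⟨h1, h2⟩ | ⟨h1, h2⟩ <;>
            constructor <;> linarith [hbc]
        have h1 : -(2*(b:ℝ)) ≤ (k:ℝ) := le_of_mul_le_mul_right
          (by linarith [hbound.1]) hc
        have h2 : (k:ℝ) ≤ 2*(b:ℝ) := le_of_mul_le_mul_right
          (by linarith [hbound.2]) hc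
        rw [hJdef, Finset.mem_Icc]
        constructor
        · have hx : ((-(2*(b:ℤ)) : ℤ) : ℝ) ≤ ((k:ℤ):ℝ) := by push_cast; linarith
          exact_mod_cast hx
        · have hx : ((k:ℤ):ℝ) ≤ (((2*(b:ℤ)) : ℤ):ℝ) := by push_cast; linarith
          exact_mod_cast hx
      exact Set.mem_biUnion hkJ hk
    have hcard : J.card = 4*b + 1 := by
      rw [hJdef, Int.card_Icc]
      omega
    calc mu0 A ≤ mu0 (⋃ k ∈ J,
          (Set.Icc (α + k * c - δ) (α + k * c + δ)
            ∪ Set.Icc (-α + k * c - δ) (-α + k * c + δ))) := measure_mono hcover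
      _ ≤ ∑ k ∈ J, mu0 (Set.Icc (α + k * c - δ) (α + k * c + δ)
            ∪ Set.Icc (-α + k * c - δ) (-α + k * c + δ)) :=
          measure_biUnion_finset_le _ _
      _ ≤ ∑ _k ∈ J, (ENNReal.ofReal δ + ENNReal.ofReal δ) := by
          refine Finset.sum_le_sum fun k _ => ?_
          refine le_trans (measure_union_le _ _) ?_
          exact add_le_add (mu0_Icc_le _ _) (mu0_Icc_le _ _)
      _ = (J.card : ℝ≥0∞) * (ENNReal.ofReal δ + ENNReal.ofReal δ) := by
          rw [Finset.sum_const, nsmul_eq_mul]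
      _ = ENNReal.ofReal ((J.card : ℝ) * (2*δ)) := by
          rw [← ENNReal.ofReal_add hδpos.le hδpos.le, ← ENNReal.ofReal_natCast J.card,
            ← ENNReal.ofReal_mul (Nat.cast_nonneg J.card)]
          congr 1
          ring
      _ < 1 := by
          rw [ENNReal.ofReal_lt_one, hcard]
          have hbd : 0 ≤ (b:ℝ) * δ := by positivity
          have h16 : (16*(b:ℝ)+8) * δ ≤ 1 := by
            rw [← le_div_iff₀' (by positivity)]
            exact hδb
          push_cast
          nlinarith [hbd, hδpos, h16]
  -- conclude
  intro hT
  obtain ⟨n, hn⟩ := (hT.eventually_lt_const hmuA).exists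
  exact absurd (hiter n) (not_le.2 hn)
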